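/- Let l₂ : ℝ × ℝ → ℝ be defined by l₂(x, y) = (1/π)·arctan(4y(x − 1/2)) + 1/2. Then for every real x with x < 1/4 and sin(πx) ≠ 0, and every real y > 0, one has 0 < l₂(x, 4y/sin²(πx)) < 1/y. -/

import Mathlib

/-- The function l₂(x, y) = (1/π)·arctan(4y(x − 1/2)) + 1/2. -/
noncomputable def l2 (x y : ℝ) : ℝ := (1 / Real.pi) * Real.arctan (4 * y * (x - 1 / 2)) + 1 / 2

lemma arctan_lt_self_aux {z : ℝ} (hz : 0 < z) : Real.arctan z < z := by
  have h1 : 0 < Real.arctan z := by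
    rw [← Real.arctan_zero]
    exact Real.arctan_strictMono hz
  have h2 : Real.arctan z < Real.pi / 2 := Real.arctan_lt_pi_div_two z
  calc Real.arctan z < Real.tan (Real.arctan z) := Real.lt_tan h1 h2
    _ = z := Real.tan_arctan z

/-- The bound 0 < ξ₂(x, y) < 1/y for x < 1/4, where
ξ₂(x, y) = l₂(x, 4y/sin²(πx)). -/
theorem xi2_bound (x : ℝ) (hx : x < 1 / 4) (hsin : Real.sin (Real.pi * x) ≠ 0)
    (y : ℝ) (hy : 0 < y) :
    0 < l2 x (4 * y / (Real.sin (Real.pi * x)) ^ 2) ∧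
      l2 x (4 * y / (Real.sin (Real.pi * x)) ^ 2) < 1 / y := by
  have hπ : 0 < Real.pi := Real.pi_pos
  set s : ℝ := Real.sin (Real.pi * x) with hs
  have hs2 : 0 < s ^ 2 := by positivity
  have hs2le : s ^ 2 ≤ 1 := Real.sin_sq_le_one _
  set t : ℝ := 4 * y / s ^ 2 with ht
  have htpos : 0 < t := by positivity
  have htge : 4 * y ≤ t := by
    rw [ht, le_div_iff₀ hs2]
    nlinarith
  set A : ℝ := 4 * t * (x - 1 / 2) with hA
  have hAneg : A < 0 := by nlinarith
  have key : l2 x t = (Real.arctan A + Real.pi / 2) / Real.pi := by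
    rw [l2, hA]
    field_simp
  have hbig : Real.arctan A + Real.pi / 2 = Real.arctan (-A⁻¹) := by
    have := Real.arctan_inv_of_neg hAneg
    rw [Real.arctan_neg]
    linarith
  constructor
  · rw [key]
    apply div_pos _ hπ
    linarith [Real.neg_pi_div_two_lt_arctan A]
  · rw [key, hbig]
    have hinv : 0 < -A⁻¹ := neg_pos.mpr (inv_lt_zero.mpr hAneg)
    have h1 : Real.arctan (-A⁻¹) < -A⁻¹ := arctan_lt_self_aux hinv
    have hAle : 4 * y ≤ -A := by
      have h4 : 4 * t * (x - 1 / 2) ≤ 4 * t * (-(1 / 4)) :=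
        mul_le_mul_of_nonneg_left (by linarith) (by linarith)
      have : 4 * t * (-(1 / 4)) = -t := by ring
      rw [hA]; linarith
    have h2 : -A⁻¹ ≤ 1 / (4 * y) := by
      rw [neg_inv, one_div]
      exact inv_anti₀ (by linarith) hAle
    have hπ3 : 3 < Real.pi := by linarith [Real.pi_gt_three]
    rw [div_lt_div_iff₀ hπ hy]
    calc Real.arctan (-A⁻¹) * y < -A⁻¹ * y := by nlinarith
      _ ≤ 1 / (4 * y) * y := by nlinarith
      _ = 1 / 4 := by field_simp
      _ < 1 * Real.pi := by linarith
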